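/- Fix p ≥ 1 and block sizes n : Fin p → ℕ with n k ≥ 1, let ι := Σ k, Fin (n k), let G := ∏_k U(n k) with its Haar probability measure μ, and let ρ ∈ M_ι(ℂ). Then ∫_G (blockDiagonal' V) · ρ · (blockDiagonal' V)† dμ(V) = blockDiagonal'( fun k => (trace(ρ_k)/(n k)) • 1_{n k} ), where ρ_k is the k-th diagonal block of ρ. -/

import Mathlib

open MeasureTheory Matrix
open scoped ComplexConjugate

attribute [local instance] Matrix.normedAddCommGroup Matrix.normedSpace

noncomputable instance (m : ℕ) : MeasurableSpace (Matrix.unitaryGroup (Fin m) ℂ) := borel _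
instance (m : ℕ) : BorelSpace (Matrix.unitaryGroup (Fin m) ℂ) := ⟨rfl⟩

/-- The `k`-th diagonal block of a matrix indexed by the sigma type `Σ k, Fin (n k)`. -/
def diagBlock {p : ℕ} {n : Fin p → ℕ} (ρ : Matrix (Σ k, Fin (n k)) (Σ k, Fin (n k)) ℂ)
    (k : Fin p) : Matrix (Fin (n k)) (Fin (n k)) ℂ :=
  Matrix.of fun i j => ρ ⟨k, i⟩ ⟨k, j⟩

noncomputable instance (m m' : Type*) [Fintype m] [Fintype m'] : ContinuousENorm (Matrix m m' ℂ) :=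
  inferInstanceAs (ContinuousENorm (m → m' → ℂ))
instance (m m' : Type*) [Fintype m] [Fintype m'] :
    TopologicalSpace.PseudoMetrizableSpace (Matrix m m' ℂ) :=
  inferInstanceAs (TopologicalSpace.PseudoMetrizableSpace (m → m' → ℂ))
instance (m : ℕ) : SecondCountableTopology (Matrix (Fin m) (Fin m) ℂ) :=
  inferInstanceAs (SecondCountableTopology (Fin m → Fin m → ℂ))
instance (m : ℕ) : SecondCountableTopology (unitaryGroup (Fin m) ℂ) :=
  TopologicalSpace.Subtype.secondCountableTopology _

namespace BlockTwirlAux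

variable {ι : Type*} [Fintype ι] [DecidableEq ι]

lemma conj_diag_entry (M : Matrix ι ι ℂ) (d : ι → ℂ) (a b : ι) :
    (Matrix.diagonal d * M * star (Matrix.diagonal d)) a b = d a * conj (d b) * M a b := by
  rw [Matrix.star_eq_conjTranspose, Matrix.diagonal_conjTranspose, Matrix.mul_diagonal,
    Matrix.diagonal_mul]
  simp [Pi.star_apply, RCLike.star_def]
  ring

lemma conj_perm_entry (M : Matrix ι ι ℂ) (P : Matrix ι ι ℂ) (σ : Equiv.Perm ι)
    (hP : ∀ a b, P a b = if b = σ a then 1 else 0) (a b : ι) :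
    (P * M * star P) a b = M (σ a) (σ b) := by
  rw [Matrix.star_eq_conjTranspose]
  simp [Matrix.mul_apply, hP, Matrix.conjTranspose_apply, apply_ite, ite_mul, mul_ite,
    Finset.sum_ite_eq', Finset.sum_ite_eq]

lemma row_select_mem_unitaryGroup (t : ι → ι) (ht : Function.Injective t) :
    (Matrix.of fun a b : ι => if b = t a then (1:ℂ) else 0) ∈ Matrix.unitaryGroup ι ℂ := by
  rw [Matrix.mem_unitaryGroup_iff]
  ext a b
  rw [Matrix.mul_apply]
  simp only [Matrix.star_eq_conjTranspose, Matrix.conjTranspose_apply, Matrix.of_apply]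
  simp only [apply_ite (star : ℂ → ℂ), star_one, star_zero, ite_mul, one_mul,
    zero_mul, mul_ite, mul_one, mul_zero]
  rw [Finset.sum_ite_eq' Finset.univ (t b) (fun c => if c = t a then (1:ℂ) else 0)]
  simp [Matrix.one_apply, ht.eq_iff, eq_comm]

end BlockTwirlAux

set_option maxHeartbeats 1000000 in
set_option synthInstance.maxHeartbeats 200000 in
open BlockTwirlAux in
/-- **Eq. (13)/(50).** The Haar average of `ρ` over the thermodynamic group
`𝒢_T = ∏ₖ U(n k)`, acting block-diagonally, equals the block-wise maximally mixed matrix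
`ρ_dd` with the same block traces. -/
theorem block_twirl_eq_blockwise_mixed (p : ℕ) (hp : 1 ≤ p)
    (n : Fin p → ℕ) (hn : ∀ k, 1 ≤ n k)
    (μ : Measure (∀ k, Matrix.unitaryGroup (Fin (n k)) ℂ))
    [μ.IsHaarMeasure] [IsProbabilityMeasure μ]
    (ρ : Matrix (Σ k, Fin (n k)) (Σ k, Fin (n k)) ℂ) :
    (∫ V : ∀ k, Matrix.unitaryGroup (Fin (n k)) ℂ,
        Matrix.blockDiagonal' (fun k => (V k : Matrix (Fin (n k)) (Fin (n k)) ℂ)) * ρ *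
          star (Matrix.blockDiagonal' (fun k => (V k : Matrix (Fin (n k)) (Fin (n k)) ℂ))) ∂μ)
      = Matrix.blockDiagonal'
          (fun k => ((diagBlock ρ k).trace / (n k : ℂ)) •
            (1 : Matrix (Fin (n k)) (Fin (n k)) ℂ)) := by
  classical
  set B : (∀ k, Matrix.unitaryGroup (Fin (n k)) ℂ) → Matrix (Σ k, Fin (n k)) (Σ k, Fin (n k)) ℂ :=
    fun V => Matrix.blockDiagonal' (fun k => (V k : Matrix (Fin (n k)) (Fin (n k)) ℂ)) with hB
  set f : (∀ k, Matrix.unitaryGroup (Fin (n k)) ℂ) → Matrix (Σ k, Fin (n k)) (Σ k, Fin (n k)) ℂ :=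
    fun V => B V * ρ * star (B V) with hf
  show (∫ V, f V ∂μ) = _
  -- basic facts
  have hBc : Continuous B :=
    Continuous.matrix_blockDiagonal' (continuous_pi fun k => (continuous_apply k).subtype_val)
  have hfc : Continuous f := by
    rw [hf]
    simp only [Matrix.star_eq_conjTranspose]
    exact (hBc.matrix_mul continuous_const).matrix_mul hBc.matrix_conjTranspose
  have hBe : ∀ V (a c : Σ k, Fin (n k)), ‖B V a c‖ ≤ 1 := by
    rintro V ⟨k₁, i₁⟩ ⟨k₂, j₂⟩
    show ‖Matrix.blockDiagonal' (fun k => (V k : Matrix (Fin (n k)) (Fin (n k)) ℂ)) ⟨k₁,i₁⟩ ⟨k₂,j₂⟩‖ ≤ 1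
    rw [Matrix.blockDiagonal'_apply']
    split_ifs with h
    · subst h
      exact entry_norm_bound_of_unitary (V k₁).2 _ _
    · simp
  have h_int : Integrable f μ := by
    have hbound : ∀ V, ‖f V‖ ≤ (Fintype.card (Σ k, Fin (n k)) : ℝ)^2 * ‖ρ‖ := by
      intro V
      rw [Matrix.norm_le_iff (by positivity)]
      intro a b
      have hfab : f V a b = ∑ d, ∑ c, B V a c * ρ c d * star (B V b d) := by
        show (B V * ρ * star (B V)) a b = _
        simp only [Matrix.star_eq_conjTranspose, Matrix.mul_apply,
          Matrix.conjTranspose_apply, Finset.sum_mul]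
      rw [hfab]
      calc ‖∑ d, ∑ c, B V a c * ρ c d * star (B V b d)‖
          ≤ ∑ d, ‖∑ c, B V a c * ρ c d * star (B V b d)‖ := norm_sum_le _ _
        _ ≤ ∑ d : Σ k, Fin (n k), ∑ c : Σ k, Fin (n k), ‖ρ‖ := by
            refine Finset.sum_le_sum fun d _ => (norm_sum_le _ _).trans ?_
            refine Finset.sum_le_sum fun c _ => ?_
            rw [norm_mul, norm_mul, norm_star]
            calc ‖B V a c‖ * ‖ρ c d‖ * ‖B V b d‖
                ≤ 1 * ‖ρ‖ * 1 := by
                  gcongr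
                  · exact hBe V a c
                  · exact Matrix.norm_entry_le_entrywise_sup_norm ρ
                  · exact hBe V b d
              _ = ‖ρ‖ := by ring
        _ = (Fintype.card (Σ k, Fin (n k)) : ℝ)^2 * ‖ρ‖ := by
            simp [Finset.sum_const, Finset.card_univ]
            ring
    exact (integrable_const _).mono' hfc.aestronglyMeasurable
      (Filter.Eventually.of_forall hbound)
  have h_int_e : ∀ a b : Σ k, Fin (n k), Integrable (fun V => f V a b) μ := fun a b =>
    ContinuousLinearMap.integrable_comp
      ((ContinuousLinearMap.proj (R := ℂ) (φ := fun _ : Σ k, Fin (n k) => ℂ) b).comp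
        (ContinuousLinearMap.proj (R := ℂ)
          (φ := fun _ : Σ k, Fin (n k) => (Σ k, Fin (n k)) → ℂ) a)) h_int
  have hTe : ∀ a b : Σ k, Fin (n k), (∫ V, f V ∂μ) a b = ∫ V, f V a b ∂μ := fun a b =>
    (ContinuousLinearMap.integral_comp_comm
      ((ContinuousLinearMap.proj (R := ℂ) (φ := fun _ : Σ k, Fin (n k) => ℂ) b).comp
        (ContinuousLinearMap.proj (R := ℂ)
          (φ := fun _ : Σ k, Fin (n k) => (Σ k, Fin (n k)) → ℂ) a)) h_int).symm
  -- conjugation invariance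
  have hconj : ∀ (g : ∀ k, Matrix.unitaryGroup (Fin (n k)) ℂ) (a b : Σ k, Fin (n k)),
      (∫ V, f V a b ∂μ) = ∫ V, (B g * f V * star (B g)) a b ∂μ := by
    intro g a b
    rw [← MeasureTheory.integral_mul_left_eq_self (μ := μ) (fun V => f V a b) g]
    refine integral_congr_ae (Filter.Eventually.of_forall fun V => ?_)
    have hBmul : B (g * V) = B g * B V := by
      show Matrix.blockDiagonal' _ = _
      rw [← Matrix.blockDiagonal'_mul]
      rfl
    show f (g * V) a b = _
    have : f (g * V) = B g * f V * star (B g) := by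
      show B (g * V) * ρ * star (B (g * V)) = B g * (B V * ρ * star (B V)) * star (B g)
      rw [hBmul, StarMul.star_mul]
      simp only [mul_assoc]
    rw [this]
  -- off-diagonal entries vanish
  have hoff : ∀ a b : Σ k, Fin (n k), a ≠ b → (∫ V, f V a b ∂μ) = 0 := by
    intro a b hab
    set d : (Σ k, Fin (n k)) → ℂ := fun x => if x = b then -1 else 1 with hd
    have hdsq : ∀ x, d x * star (d x) = 1 := by
      intro x
      by_cases hx : x = b <;> simp [hd, hx]
    set g : ∀ k, Matrix.unitaryGroup (Fin (n k)) ℂ := fun k =>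
      ⟨Matrix.diagonal (fun i => d ⟨k, i⟩), by
        rw [Matrix.mem_unitaryGroup_iff, Matrix.star_eq_conjTranspose,
          Matrix.diagonal_conjTranspose, Matrix.diagonal_mul_diagonal]
        exact (congrArg Matrix.diagonal (funext fun i => hdsq ⟨k,i⟩)).trans
          Matrix.diagonal_one⟩ with hg
    have hBg : B g = Matrix.diagonal d := by
      show Matrix.blockDiagonal' _ = _
      rw [show (fun k => ((g k : Matrix (Fin (n k)) (Fin (n k)) ℂ)))
          = fun k => Matrix.diagonal (fun i => d ⟨k,i⟩) from rfl]
      rw [Matrix.blockDiagonal'_diagonal]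
    have h2 := hconj g a b
    rw [hBg] at h2
    have h3 : (∫ V, (Matrix.diagonal d * f V * star (Matrix.diagonal d)) a b ∂μ)
        = ∫ V, d a * conj (d b) * f V a b ∂μ :=
      integral_congr_ae (Filter.Eventually.of_forall fun V => conj_diag_entry (f V) d a b)
    rw [h3, integral_const_mul] at h2
    have hda : d a = 1 := by rw [hd]; simp [hab]
    have hdb : conj (d b) = -1 := by rw [hd]; simp
    rw [hda, hdb] at h2
    linear_combination h2 / 2
  -- diagonal entries within a block are equal
  have hswap : ∀ (k : Fin p) (i j : Fin (n k)),
      (∫ V, f V ⟨k,i⟩ ⟨k,i⟩ ∂μ) = ∫ V, f V ⟨k,j⟩ ⟨k,j⟩ ∂μ := by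
    intro k i j
    set σ : Equiv.Perm (Σ k, Fin (n k)) := Equiv.swap ⟨k,i⟩ ⟨k,j⟩ with hσdef
    have hσ1 : ∀ x : Σ k, Fin (n k), (σ x).1 = x.1 := by
      intro x
      rw [hσdef, Equiv.swap_apply_def]
      split_ifs with h1 h2
      · rw [h1]
      · rw [h2]
      · rfl
    set t : ∀ k', Fin (n k') → Fin (n k') :=
      fun k' a => cast (congrArg (fun j => Fin (n j)) (hσ1 ⟨k', a⟩)) (σ ⟨k', a⟩).snd with htdef
    have hta : ∀ (k') (a : Fin (n k')), σ ⟨k', a⟩ = ⟨k', t k' a⟩ := by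
      intro k' a
      exact Sigma.ext_iff.mpr ⟨hσ1 ⟨k', a⟩, (cast_heq _ _).symm⟩
    have htinj : ∀ k', Function.Injective (t k') := by
      intro k' x y hxy
      have h1 : σ ⟨k', x⟩ = σ ⟨k', y⟩ := by rw [hta, hta, hxy]
      have h2 := σ.injective h1
      simpa using h2
    set g : ∀ k', Matrix.unitaryGroup (Fin (n k')) ℂ := fun k' =>
      ⟨Matrix.of fun a b => if b = t k' a then 1 else 0,
        row_select_mem_unitaryGroup _ (htinj k')⟩ with hgdef
    have hP : ∀ a b, B g a b = if b = σ a then 1 else 0 := by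
      rintro ⟨k₁, i₁⟩ ⟨k₂, j₂⟩
      show Matrix.blockDiagonal' _ _ _ = _
      rw [Matrix.blockDiagonal'_apply', hta]
      rcases eq_or_ne k₁ k₂ with rfl | h
      · rw [dif_pos rfl]
        show (if j₂ = t k₁ i₁ then (1:ℂ) else 0) = _
        simp [Sigma.mk.inj_iff]
      · rw [dif_neg h, if_neg]
        intro hcon
        exact h (congrArg Sigma.fst hcon).symm
    calc (∫ V, f V ⟨k,i⟩ ⟨k,i⟩ ∂μ)
        = ∫ V, (B g * f V * star (B g)) ⟨k,i⟩ ⟨k,i⟩ ∂μ := hconj g ⟨k,i⟩ ⟨k,i⟩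
      _ = ∫ V, f V (σ ⟨k,i⟩) (σ ⟨k,i⟩) ∂μ :=
          integral_congr_ae (Filter.Eventually.of_forall fun V =>
            conj_perm_entry (f V) (B g) σ hP ⟨k,i⟩ ⟨k,i⟩)
      _ = ∫ V, f V ⟨k,j⟩ ⟨k,j⟩ ∂μ := by rw [hσdef, Equiv.swap_apply_left]
  -- pointwise block trace
  have block_f : ∀ V (k : Fin p) (i j : Fin (n k)), f V ⟨k,i⟩ ⟨k,j⟩
      = ∑ c : Fin (n k), ∑ d : Fin (n k),
          (V k : Matrix (Fin (n k)) (Fin (n k)) ℂ) i c * ρ ⟨k,c⟩ ⟨k,d⟩ *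
            star ((V k : Matrix (Fin (n k)) (Fin (n k)) ℂ) j d) := by
    intro V k i j
    have hfV : f V = Matrix.blockDiagonal' (fun k => (V k : Matrix (Fin (n k)) (Fin (n k)) ℂ)) * ρ *
        star (Matrix.blockDiagonal' (fun k => (V k : Matrix (Fin (n k)) (Fin (n k)) ℂ))) := rfl
    rw [hfV, Matrix.star_eq_conjTranspose, Matrix.mul_apply, ← Finset.univ_sigma_univ,
      Finset.sum_sigma]
    rw [Finset.sum_eq_single k (fun k' _ hk' => Finset.sum_eq_zero fun e _ => by
        rw [Matrix.conjTranspose_apply,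
          Matrix.blockDiagonal'_apply_ne (fun k => (V k : Matrix (Fin (n k)) (Fin (n k)) ℂ))
            j e (Ne.symm hk'), star_zero, mul_zero])
      (fun h => absurd (Finset.mem_univ k) h)]
    have inner : ∀ e : Fin (n k),
        (Matrix.blockDiagonal' (fun k => (V k : Matrix (Fin (n k)) (Fin (n k)) ℂ)) * ρ) ⟨k,i⟩ ⟨k,e⟩
        = ∑ c : Fin (n k), (V k : Matrix (Fin (n k)) (Fin (n k)) ℂ) i c * ρ ⟨k,c⟩ ⟨k,e⟩ := by
      intro e
      rw [Matrix.mul_apply, ← Finset.univ_sigma_univ, Finset.sum_sigma]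
      rw [Finset.sum_eq_single k (fun k' _ hk' => Finset.sum_eq_zero fun c _ => by
          rw [Matrix.blockDiagonal'_apply_ne (fun k => (V k : Matrix (Fin (n k)) (Fin (n k)) ℂ))
            i c (Ne.symm hk'), zero_mul])
        (fun h => absurd (Finset.mem_univ k) h)]
      refine Finset.sum_congr rfl fun c _ => ?_
      rw [Matrix.blockDiagonal'_apply_eq]
    calc (∑ e : Fin (n k),
          (Matrix.blockDiagonal' (fun k => (V k : Matrix (Fin (n k)) (Fin (n k)) ℂ)) * ρ) ⟨k,i⟩ ⟨k,e⟩ *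
            (Matrix.blockDiagonal' (fun k => (V k : Matrix (Fin (n k)) (Fin (n k)) ℂ)))ᴴ ⟨k,e⟩ ⟨k,j⟩)
        = ∑ e : Fin (n k), ∑ c : Fin (n k),
            (V k : Matrix (Fin (n k)) (Fin (n k)) ℂ) i c * ρ ⟨k,c⟩ ⟨k,e⟩ *
              star ((V k : Matrix (Fin (n k)) (Fin (n k)) ℂ) j e) := by
          refine Finset.sum_congr rfl fun e _ => ?_
          rw [Matrix.conjTranspose_apply, Matrix.blockDiagonal'_apply_eq, inner e,
            Finset.sum_mul]
      _ = _ := Finset.sum_comm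
  have hsum : ∀ V (k : Fin p), (∑ i : Fin (n k), f V ⟨k,i⟩ ⟨k,i⟩) = (diagBlock ρ k).trace := by
    intro V k
    calc (∑ i : Fin (n k), f V ⟨k,i⟩ ⟨k,i⟩)
        = ∑ i, ∑ c, ∑ d, (V k : Matrix (Fin (n k)) (Fin (n k)) ℂ) i c * ρ ⟨k,c⟩ ⟨k,d⟩ *
            star ((V k : Matrix (Fin (n k)) (Fin (n k)) ℂ) i d) := by
          exact Finset.sum_congr rfl fun i _ => block_f V k i i
      _ = ∑ c, ∑ d, ρ ⟨k,c⟩ ⟨k,d⟩ *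
            ∑ i, star ((V k : Matrix (Fin (n k)) (Fin (n k)) ℂ) i d) *
              (V k : Matrix (Fin (n k)) (Fin (n k)) ℂ) i c := by
          rw [Finset.sum_comm]
          refine Finset.sum_congr rfl fun c _ => ?_
          rw [Finset.sum_comm]
          refine Finset.sum_congr rfl fun d _ => ?_
          rw [Finset.mul_sum]
          refine Finset.sum_congr rfl fun i _ => by ring
      _ = ∑ c, ∑ d, ρ ⟨k,c⟩ ⟨k,d⟩ * (1 : Matrix (Fin (n k)) (Fin (n k)) ℂ) d c := by
          refine Finset.sum_congr rfl fun c _ => Finset.sum_congr rfl fun d _ => ?_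
          congr 1
          rw [← Matrix.UnitaryGroup.star_mul_self (V k), Matrix.mul_apply]
          refine Finset.sum_congr rfl fun i _ => ?_
          rw [Matrix.star_apply]
      _ = ∑ c, ρ ⟨k,c⟩ ⟨k,c⟩ := by
          refine Finset.sum_congr rfl fun c _ => ?_
          simp [Matrix.one_apply, mul_ite, Finset.sum_ite_eq', Finset.sum_ite_eq]
      _ = (diagBlock ρ k).trace := by
          simp [diagBlock, Matrix.trace, Matrix.diag]
  have htr : ∀ k : Fin p, (∑ i : Fin (n k), ∫ V, f V ⟨k,i⟩ ⟨k,i⟩ ∂μ) = (diagBlock ρ k).trace := by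
    intro k
    rw [← integral_finset_sum _ (fun i _ => h_int_e ⟨k,i⟩ ⟨k,i⟩)]
    simp_rw [hsum]
    simp [measure_univ]
  have hdiag : ∀ (k : Fin p) (i : Fin (n k)),
      (∫ V, f V ⟨k,i⟩ ⟨k,i⟩ ∂μ) = (diagBlock ρ k).trace / (n k : ℂ) := by
    intro k i
    have hcard : ((n k : ℂ)) ≠ 0 := by
      have := hn k
      exact_mod_cast Nat.cast_ne_zero.mpr (by omega)
    have h1 : (∑ j : Fin (n k), ∫ V, f V ⟨k,j⟩ ⟨k,j⟩ ∂μ)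
        = (n k : ℂ) * ∫ V, f V ⟨k,i⟩ ⟨k,i⟩ ∂μ := by
      rw [Finset.sum_congr rfl (fun j _ => (hswap k j i))]
      simp [Finset.sum_const, mul_comm]
    rw [← htr k, h1]
    field_simp
  -- conclude
  ext ⟨k₁, i₁⟩ ⟨k₂, j₂⟩
  rw [hTe, Matrix.blockDiagonal'_apply']
  split_ifs with h
  · subst h
    rcases eq_or_ne i₁ j₂ with rfl | hij
    · rw [hdiag]
      simp
    · rw [hoff _ _ (by simp [Sigma.mk.inj_iff, hij])]
      simp [Matrix.one_apply, hij]
  · rw [hoff _ _ (by simp [Sigma.mk.inj_iff, h])]
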